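/- Let G be a simple graph on a finite vertex set V whose girth is at least 2k+1 (k ≥ 1), let t ≥ 1 be a natural number, and let E_a, E_b be two subsets of the edge set of G with E_a ∩ E_b = ∅. Let G' be the simple graph obtained as follows: take two disjoint copies V×{a} and V×{b} of V; for each edge {u,v} ∈ E_a add a path of exactly t edges (with t−1 new internal vertices) joining u^a and v^a; for each edge {u,v} ∈ E_b add a path of exactly t edges (with t−1 new internal vertices) joining u^b and v^b; and add the edge {u^a, u^b} for every u ∈ V. Then every cycle of G' has length at least (2k+1)·t; in particular the girth of G' is at least (2k+1)·t. -/

import Mathlib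

/-- Generating relation for the two-copy construction `G'`: two disjoint copies
(`Bool` component: `false` = copy a, `true` = copy b) of the vertex set `V`,
where each edge `{a,b}` (with `a < b`) of `Ea` (resp. `Eb`) is replaced in copy a
(resp. copy b) by a path of exactly `t` edges with `t-1` fresh internal vertices
(indexed by `Fin (t-1)`), together with a crossing edge `{uᵃ, uᵇ}` for each `u ∈ V`. -/
def pathCopyRel {V : Type*} [LinearOrder V] (t : ℕ) (Ea Eb : Set (Sym2 V)) :
    ((V × Bool) ⊕ (V × V × Bool × Fin (t - 1))) →
      ((V × Bool) ⊕ (V × V × Bool × Fin (t - 1))) → Prop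
  | .inl (u, c), .inl (w, c') =>
      (u = w ∧ c ≠ c') ∨
        (t = 1 ∧ c = c' ∧ u < w ∧ s(u, w) ∈ (if c then Eb else Ea))
  | .inl (w, c0), .inr (a, b, c, j) =>
      c0 = c ∧ a < b ∧ s(a, b) ∈ (if c then Eb else Ea) ∧
        ((w = a ∧ (j : ℕ) = 0) ∨ (w = b ∧ (j : ℕ) = t - 2))
  | .inr (a, b, c, j), .inr (a', b', c', j') =>
      a = a' ∧ b = b' ∧ c = c' ∧ a < b ∧ s(a, b) ∈ (if c then Eb else Ea) ∧
        (j' : ℕ) = (j : ℕ) + 1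
  | .inr _, .inl _ => False

/-- The two-copy construction `G'` as a simple graph. -/
def twoCopyGraph {V : Type*} [LinearOrder V] (t : ℕ) (Ea Eb : Set (Sym2 V)) :
    SimpleGraph ((V × Bool) ⊕ (V × V × Bool × Fin (t - 1))) :=
  SimpleGraph.fromRel (pathCopyRel t Ea Eb)



open SimpleGraph Walk List

lemma egirth_le_of_cycle {α : Type*} {G : SimpleGraph α} {v : α} {w : G.Walk v v}
    (h : w.IsCycle) : G.egirth ≤ w.length :=
  SimpleGraph.le_egirth.mp le_rfl v w h

lemma egirth_le_of_reduced_aux {α : Type*} (G : SimpleGraph α) :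
    ∀ n : ℕ, ∀ {v : α} (w : G.Walk v v), w.length = n → 1 ≤ w.length →
      w.edges.Chain' (· ≠ ·) → G.egirth ≤ w.length := by
  classical
  intro n
  induction n using Nat.strong_induction_on with
  | _ n ih =>
  intro v w hlen hpos hchain
  cases w with
  | nil => simp at hpos
  | @cons _ v₁ _ hadj w' =>
    by_cases hnd : w'.support.Nodup
    · -- tail has no duplicates: back decomposition
      cases hrev : w'.reverse with
      | nil => exact absurd rfl hadj.ne
      | @cons _ x _ h₂ q₂ =>
        obtain ⟨w'', hw'⟩ : ∃ w'' : G.Walk v₁ x, w' = w''.concat h₂.symm := by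
          refine ⟨q₂.reverse, ?_⟩
          rw [← w'.reverse_reverse, hrev, Walk.reverse_cons, Walk.concat_eq_append]
        have hedges : (Walk.cons hadj w').edges = s(v, v₁) :: (w''.edges ++ [s(x, v)]) := by
          rw [Walk.edges_cons, hw', Walk.edges_concat, List.concat_eq_append]
        by_cases hce : s(v, v₁) = (s(x, v) : Sym2 α)
        · -- peel
          have hvx : v₁ = x := by
            rw [Sym2.eq_iff] at hce
            rcases hce with ⟨rfl, h2⟩ | ⟨-, h2⟩
            · exact absurd h2.symm hadj.ne
            · exact h2
          subst hvx
          have hlen2 : w''.length + 2 = n := by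
            have h1 := congrArg Walk.length hw'
            rw [Walk.length_concat] at h1
            rw [← hlen, Walk.length_cons]
            omega
          have hw''pos : 1 ≤ w''.length := by
            rcases Nat.eq_zero_or_pos w''.length with h0 | h0
            · exfalso
              have : w'' = Walk.nil := (Walk.length_eq_zero_iff.mp h0).eq_nil
              rw [this] at hedges
              rw [hedges] at hchain
              simp only [Walk.edges_nil, List.nil_append, List.Chain', List.isChain_cons_cons,
                List.isChain_singleton, and_true] at hchain
              exact hchain hce
            · exact h0
          have hchain2 : w''.edges.Chain' (· ≠ ·) := by
            refine hchain.infix ⟨[s(v, v₁)], [s(v₁, v)], ?_⟩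
            rw [hedges]; simp
          have hrec := ih w''.length (by omega) w'' rfl hw''pos hchain2
          refine hrec.trans (Nat.cast_le.mpr ?_)
          simp only [Walk.length_cons] at hlen ⊢
          omega
        · -- it is a cycle
          have hvns : v ∉ w''.support := by
            intro hv
            have hsup : w'.support = w''.support ++ [v] := by
              rw [hw', Walk.support_concat]
            rw [hsup] at hnd
            rcases List.nodup_append'.mp hnd with ⟨-, -, hdisj⟩
            exact hdisj hv (List.mem_singleton_self v)
          have he1 : s(v, v₁) ∉ w'.edges := by
            intro hmem
            rw [hw', Walk.edges_concat, List.concat_eq_append] at hmem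
            rcases List.mem_append.mp hmem with hmem | hmem
            · exact hvns (Walk.fst_mem_support_of_mem_edges w'' hmem)
            · exact hce (List.mem_singleton.mp hmem)
          have hcyc : (Walk.cons hadj w').IsCycle := by
            refine ⟨⟨⟨?_⟩, by simp⟩, ?_⟩
            · rw [Walk.edges_cons]
              exact List.nodup_cons.mpr ⟨he1, Walk.edges_nodup_of_support_nodup hnd⟩
            · simpa using hnd
          exact egirth_le_of_cycle hcyc
    · -- duplicate vertex in tail
      obtain ⟨x, hx⟩ := List.exists_duplicate_iff_not_nodup.mpr hnd
      have hxmem : x ∈ w'.support := hx.mem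
      set q := w'.takeUntil x hxmem with hq
      set d := w'.dropUntil x hxmem with hd
      have hspec : q.append d = w' := w'.take_spec hxmem
      have hcount2 : 2 ≤ w'.support.count x := List.duplicate_iff_two_le_count.mp hx
      have hcount1 : q.support.count x = 1 := w'.count_support_takeUntil_eq_one hxmem
      have hxd : x ∈ d.support.tail := by
        have hsup : w'.support = q.support ++ d.support.tail := by
          rw [← hspec, Walk.support_append]
        rw [hsup, List.count_append, hcount1] at hcount2
        have : 0 < d.support.tail.count x := by omega
        exact List.count_pos_iff.mp this
      cases hdc : d with
      | nil => rw [hdc] at hxd; simp at hxd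
      | @cons _ y _ h₃ d₂ =>
        have hxd₂ : x ∈ d₂.support := by rw [hdc] at hxd; simpa using hxd
        have hrlen : q.length + d.length = w'.length := by
          rw [← hspec, Walk.length_append]
        have hdlen : d.length = d₂.length + 1 := by rw [hdc, Walk.length_cons]
        have htake : (d₂.takeUntil x hxd₂).length ≤ d₂.length := Walk.length_takeUntil_le d₂ hxd₂
        have hlt : (Walk.cons h₃ (d₂.takeUntil x hxd₂)).length < n := by
          rw [← hlen]; simp only [Walk.length_cons]; omega
        have hd₂e : d₂.edges = (d₂.takeUntil x hxd₂).edges ++ (d₂.dropUntil x hxd₂).edges := by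
          rw [← Walk.edges_append]
          exact congrArg Walk.edges (d₂.take_spec hxd₂).symm
        have hredges : (Walk.cons hadj w').edges =
            (s(v, v₁) :: q.edges) ++ (Walk.cons h₃ (d₂.takeUntil x hxd₂)).edges ++
              (d₂.dropUntil x hxd₂).edges := by
          rw [Walk.edges_cons, ← hspec, Walk.edges_append, hdc, Walk.edges_cons, hd₂e,
            Walk.edges_cons]
          simp
        have hchain2 : (Walk.cons h₃ (d₂.takeUntil x hxd₂)).edges.Chain' (· ≠ ·) := by
          refine hchain.infix ⟨s(v, v₁) :: q.edges, (d₂.dropUntil x hxd₂).edges, ?_⟩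
          rw [hredges]
        have hrec := ih _ hlt (Walk.cons h₃ (d₂.takeUntil x hxd₂)) rfl
          (by simp [Walk.length_cons]) hchain2
        refine hrec.trans (Nat.cast_le.mpr ?_)
        simp only [Walk.length_cons]
        omega

lemma egirth_le_of_reduced {α : Type*} {G : SimpleGraph α} {v : α} (w : G.Walk v v)
    (hpos : 1 ≤ w.length) (hchain : w.edges.Chain' (· ≠ ·)) :
    G.egirth ≤ w.length :=
  egirth_le_of_reduced_aux G w.length w rfl hpos hchain

section
variable {V : Type*} [LinearOrder V] {t : ℕ} {Ea Eb : Set (Sym2 V)}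

open SimpleGraph Walk List


private abbrev TCV (V : Type*) (t : ℕ) := (V × Bool) ⊕ (V × V × Bool × Fin (t - 1))

lemma tcg_adj_inl_inl {u w : V} {c c' : Bool} :
    (twoCopyGraph t Ea Eb).Adj (Sum.inl (u, c)) (Sum.inl (w, c')) ↔
      ((u = w ∧ c ≠ c') ∨ (t = 1 ∧ c = c' ∧ u ≠ w ∧ s(u, w) ∈ (if c then Eb else Ea))) := by
  rw [twoCopyGraph, SimpleGraph.fromRel_adj]
  simp only [pathCopyRel, Ne, Sum.inl.injEq, Prod.mk.injEq, not_and]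
  constructor
  · rintro ⟨hne, (⟨rfl, hc⟩ | ⟨ht, rfl, hlt, hm⟩) | (⟨rfl, hc⟩ | ⟨ht, rfl, hlt, hm⟩)⟩
    · exact Or.inl ⟨rfl, hc⟩
    · exact Or.inr ⟨ht, rfl, hlt.ne, hm⟩
    · exact Or.inl ⟨rfl, fun h => hc h.symm⟩
    · exact Or.inr ⟨ht, rfl, hlt.ne', by rwa [Sym2.eq_swap]⟩
  · rintro (⟨rfl, hc⟩ | ⟨ht, rfl, hne, hm⟩)
    · exact ⟨fun h => hc, Or.inl (Or.inl ⟨rfl, hc⟩)⟩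
    · refine ⟨fun h h2 => hne h, ?_⟩
      rcases lt_or_gt_of_ne hne with hlt | hlt
      · exact Or.inl (Or.inr ⟨ht, rfl, hlt, hm⟩)
      · exact Or.inr (Or.inr ⟨ht, rfl, hlt, by rwa [Sym2.eq_swap]⟩)

lemma tcg_adj_inl_inr {w : V} {c0 : Bool} {a b : V} {c : Bool} {j : Fin (t - 1)} :
    (twoCopyGraph t Ea Eb).Adj (Sum.inl (w, c0)) (Sum.inr (a, b, c, j)) ↔
      (c0 = c ∧ a < b ∧ s(a, b) ∈ (if c then Eb else Ea) ∧
        ((w = a ∧ (j : ℕ) = 0) ∨ (w = b ∧ (j : ℕ) = t - 2))) := by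
  rw [twoCopyGraph, SimpleGraph.fromRel_adj]
  simp only [pathCopyRel]
  constructor
  · rintro ⟨-, h | h⟩
    · exact h
    · exact h.elim
  · intro h
    exact ⟨by simp, Or.inl h⟩

lemma tcg_adj_inr_inl {w : V} {c0 : Bool} {a b : V} {c : Bool} {j : Fin (t - 1)} :
    (twoCopyGraph t Ea Eb).Adj (Sum.inr (a, b, c, j)) (Sum.inl (w, c0)) ↔
      (c0 = c ∧ a < b ∧ s(a, b) ∈ (if c then Eb else Ea) ∧
        ((w = a ∧ (j : ℕ) = 0) ∨ (w = b ∧ (j : ℕ) = t - 2))) := by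
  rw [SimpleGraph.adj_comm]; exact tcg_adj_inl_inr

lemma tcg_adj_inr_inr {a b : V} {c : Bool} {j : Fin (t - 1)} {a' b' : V} {c' : Bool}
    {j' : Fin (t - 1)} :
    (twoCopyGraph t Ea Eb).Adj (Sum.inr (a, b, c, j)) (Sum.inr (a', b', c', j')) ↔
      (a = a' ∧ b = b' ∧ c = c' ∧ a < b ∧ s(a, b) ∈ (if c then Eb else Ea) ∧
        ((j' : ℕ) = (j : ℕ) + 1 ∨ (j : ℕ) = (j' : ℕ) + 1)) := by
  rw [twoCopyGraph, SimpleGraph.fromRel_adj]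
  simp only [pathCopyRel]
  constructor
  · rintro ⟨hne, ⟨rfl, rfl, rfl, h4, h5, h6⟩ | ⟨rfl, rfl, rfl, h4, h5, h6⟩⟩
    · exact ⟨rfl, rfl, rfl, h4, h5, Or.inl h6⟩
    · exact ⟨rfl, rfl, rfl, h4, h5, Or.inr h6⟩
  · rintro ⟨rfl, rfl, rfl, h4, h5, h6⟩
    have hne : (Sum.inr (a, b, c, j) : TCV V t) ≠ Sum.inr (a, b, c, j') := by
      intro hEq
      have hj : j = j' := by simpa using hEq
      have := congrArg Fin.val hj
      rcases h6 with h6 | h6 <;> omega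
    rcases h6 with h6 | h6
    · exact ⟨hne, Or.inl ⟨rfl, rfl, rfl, h4, h5, h6⟩⟩
    · exact ⟨hne, Or.inr ⟨rfl, rfl, rfl, h4, h5, h6⟩⟩

lemma tcg_first_edge_mem {x z : TCV V t} {y : TCV V t} (q : (twoCopyGraph t Ea Eb).Walk x y)
    (h : q.support.tail.head? = some z) : s(x, z) ∈ q.edges := by
  cases q with
  | nil => simp at h
  | cons hadj q' =>
    simp only [Walk.support_cons, List.tail_cons] at h
    rw [Walk.support_eq_cons] at h
    simp only [List.head?_cons, Option.some.injEq] at h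
    subst h
    simp [Walk.edges_cons]


lemma tcg_runup {u₀ : V} {c₀ : Bool} {a b : V} {c : Bool} (ht2 : 2 ≤ t) :
    ∀ (d : ℕ), ∀ (j : Fin (t - 1)), t - 2 - (j : ℕ) = d →
      ∀ (q : (twoCopyGraph t Ea Eb).Walk (Sum.inr (a, b, c, j)) (Sum.inl (u₀, c₀))),
        q.support.Nodup → q.edges.Nodup →
        (∀ jp : Fin (t - 1), (jp : ℕ) + 1 = (j : ℕ) →
          (Sum.inr (a, b, c, jp) : TCV V t) ∉ q.support) →
        ((j : ℕ) = 0 → s(Sum.inl (a, c), (Sum.inr (a, b, c, j) : TCV V t)) ∉ q.edges) →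
        ∃ (q' : (twoCopyGraph t Ea Eb).Walk (Sum.inl (b, c)) (Sum.inl (u₀, c₀)))
          (L : List (TCV V t)),
          q.length = d + 1 + q'.length ∧
          q.support = L ++ q'.support.tail ∧
          (Sum.inr (a, b, c, ⟨t - 2, by omega⟩) : TCV V t) ∈ L ∧
          (Sum.inl (b, c) : TCV V t) ∈ L ∧
          q'.edges <:+ q.edges := by
  intro d
  induction d with
  | zero =>
    intro j hd q hsup hedg hbanv hbane
    have hjv : (j : ℕ) = t - 2 := by have := j.isLt; omega
    cases q with
    | @cons _ y _ hadj q'' =>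
      cases y with
      | inl pr =>
        obtain ⟨w, cw⟩ := pr
        rw [tcg_adj_inr_inl] at hadj
        obtain ⟨hcw, hab', hmem', hcase⟩ := hadj
        subst hcw
        rcases hcase with ⟨hw, hj0⟩ | ⟨hw, hjt⟩ <;> subst hw
        · exfalso
          refine hbane hj0 ?_
          rw [Walk.edges_cons]
          exact List.mem_cons.mpr (Or.inl Sym2.eq_swap)
        · refine ⟨q'', [Sum.inr (a, w, cw, j), Sum.inl (w, cw)], ?_, ?_, ?_, ?_, ?_⟩
          · rw [Walk.length_cons]; omega
          · rw [Walk.support_cons, Walk.support_eq_cons q'']; rfl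
          · have hj : (⟨t - 2, by omega⟩ : Fin (t - 1)) = j := Fin.ext (by simpa using hjv.symm)
            rw [hj]; exact List.mem_cons_self
          · simp
          · rw [Walk.edges_cons]; exact List.suffix_cons _ _
      | inr pr =>
        obtain ⟨a', b', c', j'⟩ := pr
        rw [tcg_adj_inr_inr] at hadj
        obtain ⟨rfl, rfl, rfl, -, -, hj6⟩ := hadj
        rcases hj6 with h | h
        · exfalso; have := j'.isLt; omega
        · exfalso
          refine hbanv j' (by omega) ?_
          rw [Walk.support_cons]
          exact List.mem_cons_of_mem _ (Walk.start_mem_support q'')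
  | succ d' ihd =>
    intro j hd q hsup hedg hbanv hbane
    have hjlt : (j : ℕ) < t - 2 := by omega
    cases q with
    | @cons _ y _ hadj q'' =>
      cases y with
      | inl pr =>
        obtain ⟨w, cw⟩ := pr
        rw [tcg_adj_inr_inl] at hadj
        obtain ⟨hcw, hab', hmem', hcase⟩ := hadj
        subst hcw
        rcases hcase with ⟨hw, hj0⟩ | ⟨hw, hjt⟩ <;> subst hw
        · exfalso
          refine hbane hj0 ?_
          rw [Walk.edges_cons]
          exact List.mem_cons.mpr (Or.inl Sym2.eq_swap)
        · exfalso; omega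
      | inr pr =>
        obtain ⟨a', b', c', j'⟩ := pr
        rw [tcg_adj_inr_inr] at hadj
        obtain ⟨rfl, rfl, rfl, -, -, hj6⟩ := hadj
        rcases hj6 with h | h
        · rw [Walk.support_cons] at hsup
          rw [Walk.edges_cons] at hedg
          obtain ⟨q', L, hl1, hl2, hl3, hl4, hl5⟩ :=
            ihd j' (by omega) q'' (List.nodup_cons.mp hsup).2 (List.nodup_cons.mp hedg).2
              (by
                rintro jp hjp hmem
                have hpj : jp = j := Fin.ext (by omega)
                subst hpj
                exact (List.nodup_cons.mp hsup).1 hmem)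
              (fun h0 => absurd h0 (by omega))
          refine ⟨q', Sum.inr (a, b, c, j) :: L, ?_, ?_, ?_, ?_, ?_⟩
          · rw [Walk.length_cons]; omega
          · rw [Walk.support_cons, hl2]; rfl
          · exact List.mem_cons_of_mem _ hl3
          · exact List.mem_cons_of_mem _ hl4
          · refine hl5.trans ?_; rw [Walk.edges_cons]; exact List.suffix_cons _ _
        · exfalso
          refine hbanv j' (by omega) ?_
          rw [Walk.support_cons]
          exact List.mem_cons_of_mem _ (Walk.start_mem_support q'')

lemma tcg_rundown {u₀ : V} {c₀ : Bool} {a b : V} {c : Bool} (ht2 : 2 ≤ t) :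
    ∀ (d : ℕ), ∀ (j : Fin (t - 1)), (j : ℕ) = d →
      ∀ (q : (twoCopyGraph t Ea Eb).Walk (Sum.inr (a, b, c, j)) (Sum.inl (u₀, c₀))),
        q.support.Nodup → q.edges.Nodup →
        (∀ jp : Fin (t - 1), (jp : ℕ) = (j : ℕ) + 1 →
          (Sum.inr (a, b, c, jp) : TCV V t) ∉ q.support) →
        ((j : ℕ) = t - 2 → s(Sum.inl (b, c), (Sum.inr (a, b, c, j) : TCV V t)) ∉ q.edges) →
        ∃ (q' : (twoCopyGraph t Ea Eb).Walk (Sum.inl (a, c)) (Sum.inl (u₀, c₀)))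
          (L : List (TCV V t)),
          q.length = d + 1 + q'.length ∧
          q.support = L ++ q'.support.tail ∧
          (Sum.inr (a, b, c, ⟨0, by omega⟩) : TCV V t) ∈ L ∧
          (Sum.inl (a, c) : TCV V t) ∈ L ∧
          q'.edges <:+ q.edges := by
  intro d
  induction d with
  | zero =>
    intro j hd q hsup hedg hbanv hbane
    cases q with
    | @cons _ y _ hadj q'' =>
      cases y with
      | inl pr =>
        obtain ⟨w, cw⟩ := pr
        rw [tcg_adj_inr_inl] at hadj
        obtain ⟨hcw, hab', hmem', hcase⟩ := hadj
        subst hcw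
        rcases hcase with ⟨hw, hj0⟩ | ⟨hw, hjt⟩ <;> subst hw
        · refine ⟨q'', [Sum.inr (w, b, cw, j), Sum.inl (w, cw)], ?_, ?_, ?_, ?_, ?_⟩
          · rw [Walk.length_cons]; omega
          · rw [Walk.support_cons, Walk.support_eq_cons q'']; rfl
          · have hj : (⟨0, by omega⟩ : Fin (t - 1)) = j := Fin.ext (by simpa using hd.symm)
            rw [hj]; exact List.mem_cons_self
          · simp
          · rw [Walk.edges_cons]; exact List.suffix_cons _ _
        · exfalso
          refine hbane (by omega) ?_
          rw [Walk.edges_cons]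
          exact List.mem_cons.mpr (Or.inl Sym2.eq_swap)
      | inr pr =>
        obtain ⟨a', b', c', j'⟩ := pr
        rw [tcg_adj_inr_inr] at hadj
        obtain ⟨rfl, rfl, rfl, -, -, hj6⟩ := hadj
        rcases hj6 with h | h
        · exfalso
          refine hbanv j' (by omega) ?_
          rw [Walk.support_cons]
          exact List.mem_cons_of_mem _ (Walk.start_mem_support q'')
        · exfalso; omega
  | succ d' ihd =>
    intro j hd q hsup hedg hbanv hbane
    cases q with
    | @cons _ y _ hadj q'' =>
      cases y with
      | inl pr =>
        obtain ⟨w, cw⟩ := pr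
        rw [tcg_adj_inr_inl] at hadj
        obtain ⟨hcw, hab', hmem', hcase⟩ := hadj
        subst hcw
        rcases hcase with ⟨hw, hj0⟩ | ⟨hw, hjt⟩ <;> subst hw
        · exfalso; omega
        · exfalso
          refine hbane hjt ?_
          rw [Walk.edges_cons]
          exact List.mem_cons.mpr (Or.inl Sym2.eq_swap)
      | inr pr =>
        obtain ⟨a', b', c', j'⟩ := pr
        rw [tcg_adj_inr_inr] at hadj
        obtain ⟨rfl, rfl, rfl, -, -, hj6⟩ := hadj
        rcases hj6 with h | h
        · exfalso
          refine hbanv j' (by omega) ?_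
          rw [Walk.support_cons]
          exact List.mem_cons_of_mem _ (Walk.start_mem_support q'')
        · rw [Walk.support_cons] at hsup
          rw [Walk.edges_cons] at hedg
          obtain ⟨q', L, hl1, hl2, hl3, hl4, hl5⟩ :=
            ihd j' (by omega) q'' (List.nodup_cons.mp hsup).2 (List.nodup_cons.mp hedg).2
              (by
                rintro jp hjp hmem
                have hpj : jp = j := Fin.ext (by omega)
                subst hpj
                exact (List.nodup_cons.mp hsup).1 hmem)
              (by
                intro h0
                exfalso
                have := j.isLt
                omega)
          refine ⟨q', Sum.inr (a, b, c, j) :: L, ?_, ?_, ?_, ?_, ?_⟩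
          · rw [Walk.length_cons]; omega
          · rw [Walk.support_cons, hl2]; rfl
          · exact List.mem_cons_of_mem _ hl3
          · exact List.mem_cons_of_mem _ hl4
          · refine hl5.trans ?_; rw [Walk.edges_cons]; exact List.suffix_cons _ _


def EntryData (t : ℕ) (w : V) (c : Bool) (e : Sym2 V) (z : TCV V t) : Prop :=
  (t = 1 ∧ ∃ w' : V, z = Sum.inl (w', c) ∧ e = s(w, w')) ∨
  (∃ (aa bb : V) (jj : Fin (t - 1)), z = Sum.inr (aa, bb, c, jj) ∧ aa < bb ∧ e = s(aa, bb) ∧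
    ((w = aa ∧ (jj : ℕ) = 0) ∨ (w = bb ∧ (jj : ℕ) = t - 2)))

def MainSpec (G : SimpleGraph V) (t : ℕ) (Ea Eb : Set (Sym2 V)) (u₀ : V) (c₀ : Bool)
    (u : V) (c : Bool)
    (p : (twoCopyGraph t Ea Eb).Walk (Sum.inl (u, c)) (Sum.inl (u₀, c₀))) : Prop :=
  ∃ (W : G.Walk u u₀) (r : ℕ),
    p.length = t * W.length + r ∧
    W.edges.Chain' (· ≠ ·) ∧
    (∀ e₁ ∈ W.edges.head?,
      (e₁ ∈ (if c then Ea else Eb) ∧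
        p.support.tail.head? = some (Sum.inl (u, !c))) ∨
      (e₁ ∈ (if c then Eb else Ea) ∧
        ∃ z, p.support.tail.head? = some z ∧ EntryData t u c e₁ z)) ∧
    (W.Nil → p.length ≤ 1 ∧
      (p.length = 1 → p.support.tail.head? = some (Sum.inl (u, !c))))

lemma tcg_main_rec (G : SimpleGraph V) (hEaG : Ea ⊆ G.edgeSet) (hEbG : Eb ⊆ G.edgeSet)
    (hdisj : Ea ∩ Eb = ∅) (u₀ : V) (c₀ : Bool) :
    ∀ (n : ℕ) (u : V) (c : Bool)
      (p : (twoCopyGraph t Ea Eb).Walk (Sum.inl (u, c)) (Sum.inl (u₀, c₀))),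
      p.length = n → p.support.tail.Nodup → p.edges.Nodup →
      MainSpec G t Ea Eb u₀ c₀ u c p := by
  intro n
  induction n using Nat.strong_induction_on with
  | _ n ih =>
  intro u c p hlen hsup hedg
  cases p with
  | nil =>
    exact ⟨Walk.nil, 0, by simp, List.isChain_nil, by simp, by simp⟩
  | @cons _ y _ hadj q =>
    have hqs : q.support.Nodup := by simpa using hsup
    have hqs' : q.support.tail.Nodup := by
      have h2 := hqs; rw [Walk.support_eq_cons q] at h2
      exact (List.nodup_cons.mp h2).2
    have hstart : (Walk.cons hadj q).support.tail.head? = some y := by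
      rw [Walk.support_cons, List.tail_cons, Walk.support_eq_cons q]; rfl
    rw [Walk.edges_cons] at hedg
    have he0 := (List.nodup_cons.mp hedg).1
    have heq := (List.nodup_cons.mp hedg).2
    cases y with
    | inl pr =>
      obtain ⟨w, cw⟩ := pr
      rcases tcg_adj_inl_inl.mp hadj with ⟨hw, hccw⟩ | ⟨ht1', hccw, hne, hmem⟩
      · -- CROSS step
        subst hw
        have hcw : cw = !c := by cases c <;> cases cw <;> simp_all
        subst hcw
        obtain ⟨W', r', h1, h2, h4, h5⟩ :=
          ih q.length (by rw [← hlen]; simp [Walk.length_cons]) u (!c) q rfl hqs' heq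
        refine ⟨W', r' + 1, ?_, h2, ?_, ?_⟩
        · rw [Walk.length_cons, h1]; omega
        · intro e₁ he₁
          rcases h4 e₁ he₁ with ⟨hmem1, hsnd⟩ | ⟨hmem2, z, hsnd, hED⟩
          · exfalso
            rw [Bool.not_not] at hsnd
            have hfe := tcg_first_edge_mem q hsnd
            exact he0 (by rw [Sym2.eq_swap]; exact hfe)
          · left
            refine ⟨by cases c <;> simpa using hmem2, hstart⟩
        · intro hNil
          obtain ⟨hle, hone⟩ := h5 hNil
          rcases Nat.lt_or_ge q.length 1 with h0 | h0
          · have hq0 : q.length = 0 := by omega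
            refine ⟨by rw [Walk.length_cons]; omega, fun _ => hstart⟩
          · exfalso
            have hq1 : q.length = 1 := by omega
            have hsnd := hone hq1
            rw [Bool.not_not] at hsnd
            have hfe := tcg_first_edge_mem q hsnd
            exact he0 (by rw [Sym2.eq_swap]; exact hfe)
      · -- t = 1 edge step
        subst hccw
        have hG : G.Adj u w := by
          refine (G.mem_edgeSet).mp ?_
          cases c
          · exact hEaG (by simpa using hmem)
          · exact hEbG (by simpa using hmem)
        obtain ⟨W', r', h1, h2, h4, h5⟩ :=
          ih q.length (by rw [← hlen]; simp [Walk.length_cons]) w c q rfl hqs' heq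
        refine ⟨Walk.cons hG W', r', ?_, ?_, ?_, ?_⟩
        · rw [Walk.length_cons, h1, Walk.length_cons, ht1']
          ring
        · rw [Walk.edges_cons, List.Chain', List.isChain_cons]
          refine ⟨?_, h2⟩
          intro e' he' heq'
          rcases h4 e' he' with ⟨hmem2, hsnd⟩ | ⟨hmem2, z₁, hsnd, hED⟩
          · have hinter : s(u, w) ∈ Ea ∩ Eb := by
              cases c
              · exact ⟨by simpa using hmem, by rw [heq']; simpa using hmem2⟩
              · exact ⟨by rw [heq']; simpa using hmem2, by simpa using hmem⟩
            rw [hdisj] at hinter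
            exact hinter
          · rcases hED with ⟨-, w'', hz, he'eq⟩ | ⟨aa, bb, jj, _, _, _, _⟩
            · rw [he'eq] at heq'
              rcases Sym2.eq_iff.mp heq' with ⟨h1', h2'⟩ | ⟨h1', h2'⟩
              · exact hne h1'
              · subst hz
                rw [← h1'] at hsnd
                have hfe := tcg_first_edge_mem q hsnd
                exact he0 (by rw [Sym2.eq_swap]; exact hfe)
            · have := jj.isLt; omega
        · intro e₁ he₁
          rw [Walk.edges_cons, List.head?_cons, Option.mem_some_iff] at he₁
          subst he₁
          right
          refine ⟨hmem, Sum.inl (w, c), hstart, Or.inl ⟨ht1', w, rfl, rfl⟩⟩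
        · intro hNil
          exact absurd hNil Walk.not_nil_cons
    | inr pr =>
      obtain ⟨a, b, cg, j⟩ := pr
      obtain ⟨hc, hab, hmem, hcase⟩ := tcg_adj_inl_inr.mp hadj
      subst hc
      have ht2 : 2 ≤ t := by have := j.isLt; omega
      rcases hcase with ⟨hu, hj0⟩ | ⟨hu, hjt⟩
      · -- entered at the a-end, use runup
        subst hu
        obtain ⟨q', L, hr1, hr2, hr3, hr4, hr5⟩ :=
          tcg_runup ht2 (t - 2) j (by omega) q hqs heq
            (fun jp hjp => absurd hjp (by omega))
            (fun _ => he0)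
        have hlt : q'.length < n := by
          rw [← hlen, Walk.length_cons, hr1]; omega
        obtain ⟨W', r', h1, h2, h4, h5⟩ :=
          ih q'.length hlt b c q' rfl
            (by
              rw [hr2] at hqs
              exact ((List.nodup_append'.mp hqs).2.1))
            (hr5.sublist.nodup heq)
        refine ⟨Walk.cons ((G.mem_edgeSet).mp
          (by cases c with | false => exact hEaG (by simpa using hmem) | true => exact hEbG (by simpa using hmem))
          : G.Adj u b) W', r', ?_, ?_, ?_, ?_⟩
        · rw [Walk.length_cons, hr1, h1, Walk.length_cons, Nat.mul_add, Nat.mul_one]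
          omega
        · rw [Walk.edges_cons, List.Chain', List.isChain_cons]
          refine ⟨?_, h2⟩
          intro e' he' heq'
          rcases h4 e' he' with ⟨hmem2, hsnd⟩ | ⟨hmem2, z₁, hsnd, hED⟩
          · have hinter : s(u, b) ∈ Ea ∩ Eb := by
              cases c
              · exact ⟨by simpa using hmem, by rw [heq']; simpa using hmem2⟩
              · exact ⟨by rw [heq']; simpa using hmem2, by simpa using hmem⟩
            rw [hdisj] at hinter
            exact hinter
          · rcases hED with ⟨ht1', -⟩ | ⟨aa, bb, jj, hz, habb, he'eq, hend⟩
            · omega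
            · rw [he'eq] at heq'
              rcases Sym2.eq_iff.mp heq' with ⟨h1', h2'⟩ | ⟨h1', h2'⟩
              · -- aa = u, bb = b
                subst h1'; subst h2'
                rcases hend with ⟨hba, -⟩ | ⟨-, hjj⟩
                · exact absurd hba.symm hab.ne
                · have hzz : z₁ = Sum.inr (u, b, c, ⟨t - 2, by omega⟩) := by
                    rw [hz]
                    congr 1
                    exact congrArg _ (congrArg _ (congrArg _ (Fin.ext hjj)))
                  have hz1mem : z₁ ∈ q'.support.tail :=
                    List.mem_of_mem_head? (by rw [hsnd]; rfl)
                  rw [hr2] at hqs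
                  exact (List.nodup_append'.mp hqs).2.2 (hzz ▸ hr3) hz1mem
              · subst h1'; subst h2'
                exact lt_asymm habb hab
        · intro e₁ he₁
          rw [Walk.edges_cons, List.head?_cons, Option.mem_some_iff] at he₁
          subst he₁
          right
          exact ⟨hmem, Sum.inr (u, b, c, j), hstart,
            Or.inr ⟨u, b, j, rfl, hab, rfl, Or.inl ⟨rfl, hj0⟩⟩⟩
        · intro hNil
          exact absurd hNil Walk.not_nil_cons
      · -- entered at the b-end, use rundown
        subst hu
        obtain ⟨q', L, hr1, hr2, hr3, hr4, hr5⟩ :=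
          tcg_rundown ht2 (t - 2) j hjt q hqs heq
            (fun jp hjp => absurd jp.isLt (by omega))
            (fun _ => he0)
        have hlt : q'.length < n := by
          rw [← hlen, Walk.length_cons, hr1]; omega
        obtain ⟨W', r', h1, h2, h4, h5⟩ :=
          ih q'.length hlt a c q' rfl
            (by
              rw [hr2] at hqs
              exact ((List.nodup_append'.mp hqs).2.1))
            (hr5.sublist.nodup heq)
        refine ⟨Walk.cons (((G.mem_edgeSet).mp
          (by cases c with | false => exact hEaG (by simpa using hmem) | true => exact hEbG (by simpa using hmem))
          : G.Adj a u).symm) W', r', ?_, ?_, ?_, ?_⟩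
        · rw [Walk.length_cons, hr1, h1, Walk.length_cons, Nat.mul_add, Nat.mul_one]
          omega
        · rw [Walk.edges_cons, List.Chain', List.isChain_cons]
          refine ⟨?_, h2⟩
          intro e' he' heq'
          rcases h4 e' he' with ⟨hmem2, hsnd⟩ | ⟨hmem2, z₁, hsnd, hED⟩
          · have hinter : s(u, a) ∈ Ea ∩ Eb := by
              have hmem' : s(u, a) ∈ (if c then Eb else Ea) := by
                rw [Sym2.eq_swap]; exact hmem
              cases c
              · exact ⟨by simpa using hmem', by rw [heq']; simpa using hmem2⟩
              · exact ⟨by rw [heq']; simpa using hmem2, by simpa using hmem'⟩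
            rw [hdisj] at hinter
            exact hinter
          · rcases hED with ⟨ht1', -⟩ | ⟨aa, bb, jj, hz, habb, he'eq, hend⟩
            · omega
            · rw [he'eq] at heq'
              rcases Sym2.eq_iff.mp heq' with ⟨h1', h2'⟩ | ⟨h1', h2'⟩
              · -- u = aa, a = bb : contradiction with a < u, aa < bb
                subst h1'; subst h2'
                exact lt_asymm habb hab
              · -- u = bb, a = aa
                subst h1'; subst h2'
                rcases hend with ⟨-, hjj⟩ | ⟨hba, -⟩
                · have hzz : z₁ = Sum.inr (a, u, c, ⟨0, by omega⟩) := by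
                    rw [hz]
                    congr 1
                    exact congrArg _ (congrArg _ (congrArg _ (Fin.ext hjj)))
                  have hz1mem : z₁ ∈ q'.support.tail :=
                    List.mem_of_mem_head? (by rw [hsnd]; rfl)
                  rw [hr2] at hqs
                  exact (List.nodup_append'.mp hqs).2.2 (hzz ▸ hr3) hz1mem
                · exact absurd hba hab.ne
        · intro e₁ he₁
          rw [Walk.edges_cons, List.head?_cons, Option.mem_some_iff] at he₁
          subst he₁
          right
          refine ⟨by rw [Sym2.eq_swap]; exact hmem, Sum.inr (a, u, c, j), hstart,
            Or.inr ⟨a, u, j, rfl, hab, Sym2.eq_swap, Or.inr ⟨rfl, hjt⟩⟩⟩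
        · intro hNil
          exact absurd hNil Walk.not_nil_cons


lemma tcg_exists_inl {v : TCV V t} (w : (twoCopyGraph t Ea Eb).Walk v v) (hw : w.IsCycle) :
    ∃ (u₀ : V) (c₀ : Bool), (Sum.inl (u₀, c₀) : TCV V t) ∈ w.support := by
  by_contra hno
  push_neg at hno
  have hinr : ∀ x ∈ w.support, ∃ (a : V) (b : V) (cc : Bool) (j : Fin (t - 1)), x = Sum.inr (a, b, cc, j) := by
    intro x hx
    cases x with
    | inl pr => exact absurd hx (by obtain ⟨u, cc⟩ := pr; exact hno u cc)
    | inr pr => obtain ⟨a, b, cc, j⟩ := pr; exact ⟨a, b, cc, j, rfl⟩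
  classical
  set f : TCV V t → ℕ := fun x =>
    match x with
    | Sum.inl _ => 0
    | Sum.inr (_, _, _, j) => (j : ℕ) with hf
  obtain ⟨m, hm⟩ : ∃ m, w.support.argmax f = some m := by
    rcases h : w.support.argmax f with _ | m
    · exact absurd (List.argmax_eq_none.mp h) w.support_ne_nil
    · exact ⟨m, rfl⟩
  have hmmem : m ∈ w.support := List.argmax_mem hm
  obtain ⟨a, b, cc, jm, rfl⟩ := hinr m hmmem
  have hcyc' := hw.rotate hmmem
  set w' := w.rotate _ hmmem with hw'
  have h3 : 3 ≤ w'.length := hcyc'.three_le_length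
  have hnn : ¬ w'.Nil := by rw [Walk.nil_iff_length_eq]; omega
  obtain ⟨y₁, hadj1, q, hq⟩ := Walk.not_nil_iff.mp hnn
  have hnn2 : ¬ w'.reverse.Nil := by rw [Walk.nil_iff_length_eq, Walk.length_reverse]; omega
  obtain ⟨y₂, hadj2, q₂, hq₂⟩ := Walk.not_nil_iff.mp hnn2
  have hmemsup : ∀ y : TCV V t, y ∈ w'.support.tail → y ∈ w.support := by
    intro y hy
    have h1 := (Walk.support_rotate w _ hmmem).mem_iff.mp hy
    rw [Walk.support_eq_cons w]
    exact List.mem_cons_of_mem _ h1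
  have hy₁sup : y₁ ∈ w.support := by
    refine hmemsup y₁ ?_
    rw [hq, Walk.support_cons, List.tail_cons]
    exact Walk.start_mem_support q
  have hy₂sup : y₂ ∈ w.support := by
    refine hmemsup y₂ ?_
    have h1 : y₂ ∈ w'.support := by
      have h2 : y₂ ∈ w'.reverse.support := by
        rw [hq₂, Walk.support_cons]
        exact List.mem_cons_of_mem _ (Walk.start_mem_support q₂)
      rwa [Walk.support_reverse, List.mem_reverse] at h2
    rw [Walk.support_eq_cons w'] at h1
    rcases List.mem_cons.mp h1 with h1 | h1
    · exact absurd h1.symm hadj2.ne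
    · exact h1
  obtain ⟨a1, b1, c1, j1, rfl⟩ := hinr y₁ hy₁sup
  obtain ⟨a2, b2, c2, j2, rfl⟩ := hinr y₂ hy₂sup
  obtain ⟨rfl, rfl, rfl, -, -, hj1⟩ := tcg_adj_inr_inr.mp hadj1
  obtain ⟨rfl, rfl, rfl, -, -, hj2⟩ := tcg_adj_inr_inr.mp hadj2
  have hle1 : f (Sum.inr (a, b, cc, j1)) ≤ f (Sum.inr (a, b, cc, jm)) :=
    List.le_of_mem_argmax hy₁sup hm
  have hle2 : f (Sum.inr (a, b, cc, j2)) ≤ f (Sum.inr (a, b, cc, jm)) :=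
    List.le_of_mem_argmax hy₂sup hm
  simp only [hf] at hle1 hle2
  have hj1v : (jm : ℕ) = (j1 : ℕ) + 1 := by rcases hj1 with h | h <;> omega
  have hj2v : (jm : ℕ) = (j2 : ℕ) + 1 := by rcases hj2 with h | h <;> omega
  have hy12 : j1 = j2 := Fin.val_injective (by omega)
  subst hy12
  have hce' : w'.edges =
      s(Sum.inr (a, b, cc, jm), (Sum.inr (a, b, cc, j1) : TCV V t)) :: q.edges := by
    rw [hq, Walk.edges_cons]
  have hce : w'.edges = q₂.reverse.edges ++
      [s((Sum.inr (a, b, cc, j1) : TCV V t), Sum.inr (a, b, cc, jm))] := by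
    conv_lhs => rw [show w' = q₂.reverse.concat hadj2.symm from by
      rw [← w'.reverse_reverse, hq₂, Walk.reverse_cons, Walk.concat_eq_append]]
    rw [Walk.edges_concat, List.concat_eq_append]
  have hnodup := hcyc'.isCircuit.isTrail.edges_nodup
  rw [hce'] at hnodup
  have hrep := hce'.symm.trans hce
  cases hA : q₂.reverse.edges with
  | nil =>
    rw [hA, List.nil_append] at hrep
    have hq0 : q.edges = [] := by injection hrep
    have hq0' : q.length = 0 := by rw [← Walk.length_edges, hq0]; rfl
    have : w'.length = q.length + 1 := by rw [hq, Walk.length_cons]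
    omega
  | cons e0 A' =>
    rw [hA, List.cons_append] at hrep
    injection hrep with hh1 hh2
    have hmem2 : s((Sum.inr (a, b, cc, j1) : TCV V t), Sum.inr (a, b, cc, jm)) ∈ q.edges := by
      rw [hh2]; simp
    exact (List.nodup_cons.mp hnodup).1 (by rw [Sym2.eq_swap]; exact hmem2)


end

/-- If `G` has girth at least `2k+1` and `Ea`, `Eb` are disjoint subsets of its edge
set, then every cycle of the two-copy graph `G'` has length at least `(2k+1)·t`;
in particular the girth of `G'` is at least `(2k+1)·t`. -/
theorem twoCopyGraph_girth_lower_bound_of_disjoint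
    {V : Type*} [Fintype V] [LinearOrder V] (G : SimpleGraph V)
    (k t : ℕ) (hk : 1 ≤ k) (ht : 1 ≤ t)
    (hgirth : ((2 * k + 1 : ℕ) : ℕ∞) ≤ G.egirth)
    (Ea Eb : Set (Sym2 V))
    (hEa : Ea ⊆ G.edgeSet) (hEb : Eb ⊆ G.edgeSet)
    (hdisj : Ea ∩ Eb = ∅) :
    (∀ (v : (V × Bool) ⊕ (V × V × Bool × Fin (t - 1)))
        (c : (twoCopyGraph t Ea Eb).Walk v v), c.IsCycle → (2 * k + 1) * t ≤ c.length) ∧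
      (((2 * k + 1) * t : ℕ) : ℕ∞) ≤ (twoCopyGraph t Ea Eb).egirth := by
  have hmain : ∀ (v : (V × Bool) ⊕ (V × V × Bool × Fin (t - 1)))
      (c : (twoCopyGraph t Ea Eb).Walk v v), c.IsCycle → (2 * k + 1) * t ≤ c.length := by
    intro v cyc hcyc
    obtain ⟨u₀, c₀, hmem⟩ := tcg_exists_inl cyc hcyc
    have hcyc' := hcyc.rotate hmem
    set c' := cyc.rotate _ hmem with hc'
    have hlen' : c'.length = cyc.length := by
      have h := (Walk.rotate_edges cyc _ hmem).perm.length_eq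
      rwa [Walk.length_edges, Walk.length_edges] at h
    obtain ⟨W, r, h1, h2, h4, h5⟩ :=
      tcg_main_rec G hEa hEb hdisj u₀ c₀ c'.length u₀ c₀ c' rfl
        hcyc'.support_nodup hcyc'.isCircuit.isTrail.edges_nodup
    have h3 : 3 ≤ c'.length := hcyc'.three_le_length
    have hWpos : 1 ≤ W.length := by
      by_contra h0
      push_neg at h0
      have hnil : W.Nil := Walk.nil_iff_length_eq.mpr (by omega)
      have := (h5 hnil).1
      omega
    have hgW : 2 * k + 1 ≤ W.length := by
      have h6 : G.egirth ≤ (W.length : ℕ∞) := egirth_le_of_reduced W hWpos h2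
      exact_mod_cast le_trans hgirth h6
    calc (2 * k + 1) * t ≤ W.length * t := Nat.mul_le_mul_right t hgW
      _ = t * W.length := Nat.mul_comm _ _
      _ ≤ t * W.length + r := Nat.le_add_right _ _
      _ = c'.length := h1.symm
      _ = cyc.length := hlen'
  refine ⟨hmain, ?_⟩
  rw [SimpleGraph.le_egirth]
  intro a w hw
  exact_mod_cast Nat.cast_le.mpr (hmain a w hw)
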